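/- Let n ≥ 1, μ ∈ (0,1], C₀, α ∈ (0,∞), p ∈ (n/(n+μ),1], and let Φ : (0,∞) → (0,∞) be nondecreasing, of upper type 1 with constant C₁ and of strictly lower type p; set Φ(0) := 0. Let Ω ⊂ ℝⁿ be open with closure Ω̄ and boundary ∂Ω, and let K : (0,∞)×Ω×Ω̄ → ℂ be measurable and satisfy, for all t ∈ (0,∞), x ∈ Ω and y, y₁, y₂ ∈ Ω̄: |K_t(x,y)| ≤ C₀ t^{-n/2} exp(−α‖x−y‖_∞²/t), |K_t(x,y₁) − K_t(x,y₂)| ≤ C₀ t^{-n/2} (‖y₁−y₂‖_∞/√t)^μ, and K_t(x,y) = 0 whenever y ∈ ∂Ω. Let Q₀ = Q(x₀,r₀) be a cube with Q₀ ∩ ∂Ω ≠ ∅ and let b : ℝⁿ → ℂ be bounded and measurable with supp b ⊂ Q₀ ∩ Ω. Define N(b)(x) := sup{ |∫_Ω K_{t²}(y,z) b(z) dz| : y ∈ Ω, t ∈ (0,∞), ‖x−y‖_∞ < t } for x ∈ Ω. Then there exists C, depending only on n, μ, p, C₀, α and C₁ (but not on b, Q₀ or Ω), such that ∫_Ω Φ(N(b)(x))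 dx ≤ C |Q₀| Φ(‖b‖_{L^∞}). -/

import Mathlib

open MeasureTheory ENNReal Nat

/-- The nontangential maximal function
`N(b)(x) = sup{ |∫_Ω K_{t²}(y,z) b(z) dz| : y ∈ Ω, t > 0, ‖x−y‖_∞ < t }`,
with `ℝⁿ = Fin n → ℝ` carrying the sup-norm. -/
noncomputable def nontangMax (n : ℕ) (Ω : Set (Fin n → ℝ))
    (K : ℝ → (Fin n → ℝ) → (Fin n → ℝ) → ℂ) (b : (Fin n → ℝ) → ℂ)
    (x : Fin n → ℝ) : ℝ :=
  sSup {v : ℝ | ∃ y ∈ Ω, ∃ t : ℝ, 0 < t ∧ dist x y < t ∧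
    v = ‖∫ z in Ω, K (t ^ 2) y z * b z‖}

/-- Dirichlet boundary case. The kernel has Gaussian size and Hölder regularity
(second variable ranging over `closure Ω`) and vanishes when the second variable lies on
`∂Ω`; `b` is bounded and supported in `Q₀ ∩ Ω` where the cube `Q₀ = Q(x₀,r₀)` meets `∂Ω`
(here `Q₀ = closedBall x₀ (r₀/2)` for the sup-norm, `|Q₀| = r₀ⁿ`); no moment condition on `b`
is assumed. Then `∫_Ω Φ(N(b)) ≤ C |Q₀| Φ(‖b‖_{L^∞})` with `C` independent of `b`, `Q₀`, `Ω`. -/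
lemma exists_ann {R d : ℝ} (hR : 0 < R) (h : R < d) :
    ∃ k : ℕ, 2 ^ k * R < d ∧ d ≤ 2 ^ (k + 1) * R := by
  have hex : ∃ m : ℕ, d ≤ 2 ^ m * R := by
    obtain ⟨m, hm⟩ := pow_unbounded_of_one_lt (d / R) (by norm_num : (1:ℝ) < 2)
    exact ⟨m, by rw [div_lt_iff₀ hR] at hm; linarith⟩
  classical
  set k₀ := Nat.find hex with hk₀
  have hspec : d ≤ 2 ^ k₀ * R := Nat.find_spec hex
  have hk₀ne : k₀ ≠ 0 := by
    intro h0
    rw [h0] at hspec; simp at hspec; linarith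
  obtain ⟨k, hk⟩ := Nat.exists_eq_succ_of_ne_zero hk₀ne
  refine ⟨k, ?_, by rw [← Nat.succ_eq_add_one, ← hk]; exact hspec⟩
  have := Nat.find_min hex (show k < k₀ by omega)
  push_neg at this
  exact this

lemma le_rpow_interp {c a b θ : ℝ} (hc : 0 ≤ c) (ha : c ≤ a) (hb : c ≤ b)
    (hθ0 : 0 < θ) (hθ1 : θ < 1) : c ≤ a ^ (1 - θ) * b ^ θ := by
  rcases eq_or_lt_of_le hc with h0 | h0
  · have ha0 : 0 ≤ a := le_trans hc ha
    have hb0 : 0 ≤ b := le_trans hc hb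
    rw [← h0]
    positivity
  · have h1 : c = c ^ (1 - θ) * c ^ θ := by
      rw [← Real.rpow_add h0]; norm_num
    rw [h1]
    have ha0 : (0:ℝ) ≤ a := le_trans hc ha
    gcongr <;> first | exact hc | exact ha | exact hb | linarith

lemma exp_neg_le_factorial_div (k : ℕ) {x : ℝ} (hx : 0 < x) :
    Real.exp (-x) ≤ (k ! : ℝ) / x ^ k := by
  have h1 : x ^ k / k ! ≤ Real.exp x := by
    refine le_trans ?_ (Real.sum_le_exp_of_nonneg hx.le (k+1))
    exact Finset.single_le_sum (f := fun i => x ^ i / (i ! : ℝ))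
      (fun i _ => by positivity) (Finset.self_mem_range_succ k)
  have h2 : 0 < x ^ k / (k ! : ℝ) := by positivity
  rw [Real.exp_neg]
  have h3 : (Real.exp x)⁻¹ ≤ (x ^ k / k !)⁻¹ := inv_anti₀ h2 h1
  rwa [inv_div] at h3

lemma master_annuli {n : ℕ} (c : Fin n → ℝ) {R a e : ℝ} (hR : 0 < R) (ha : 0 ≤ a)
    (he0 : 0 ≤ e) (he1 : 2 ^ n * e < 1) (f : (Fin n → ℝ) → ℝ≥0∞)
    (hbase : ∀ z, f z ≤ ENNReal.ofReal a)
    (hann : ∀ (k : ℕ) (z : Fin n → ℝ), 2 ^ k * R < dist z c →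
      f z ≤ ENNReal.ofReal (a * e ^ (k + 1))) :
    ∫⁻ z, f z ≤ ENNReal.ofReal
      (a * ((2 * R) ^ n + (4 * R) ^ n * (e * (1 - 2 ^ n * e)⁻¹))) := by
  classical
  set A : Set (Fin n → ℝ) := Metric.closedBall c R with hA
  set W : ℕ → Set (Fin n → ℝ) :=
    fun k => Metric.closedBall c (2 ^ (k + 1) * R) \ Metric.closedBall c (2 ^ k * R) with hW
  set F : (Fin n → ℝ) → ℝ≥0∞ := fun z =>
    A.indicator (fun _ => ENNReal.ofReal a) z +
      ∑' k : ℕ, (W k).indicator (fun _ => ENNReal.ofReal (a * e ^ (k + 1))) z with hF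
  have hfF : ∀ z, f z ≤ F z := by
    intro z
    rcases le_or_gt (dist z c) R with hz | hz
    · refine le_trans (hbase z) ?_
      have : A.indicator (fun _ => ENNReal.ofReal a) z = ENNReal.ofReal a :=
        Set.indicator_of_mem (Metric.mem_closedBall.2 hz) _
      rw [hF]; dsimp only; rw [this]; exact le_self_add
    · obtain ⟨k, hk1, hk2⟩ := exists_ann hR hz
      refine le_trans (hann k z hk1) ?_
      have hmem : z ∈ W k := ⟨Metric.mem_closedBall.2 hk2, fun hmem =>
        absurd (Metric.mem_closedBall.1 hmem) (not_le.2 hk1)⟩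
      have : (W k).indicator (fun _ => ENNReal.ofReal (a * e ^ (k + 1))) z
          = ENNReal.ofReal (a * e ^ (k + 1)) := Set.indicator_of_mem hmem _
      calc ENNReal.ofReal (a * e ^ (k + 1))
          = (W k).indicator (fun _ => ENNReal.ofReal (a * e ^ (k + 1))) z := this.symm
        _ ≤ ∑' j : ℕ, (W j).indicator (fun _ => ENNReal.ofReal (a * e ^ (j + 1))) z :=
            ENNReal.le_tsum k
        _ ≤ F z := by rw [hF]; exact le_add_self
  refine le_trans (lintegral_mono hfF) ?_
  have hWmeas : ∀ k, MeasurableSet (W k) :=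
    fun k => Metric.isClosed_closedBall.measurableSet.diff Metric.isClosed_closedBall.measurableSet
  have hsplit : ∫⁻ z, F z = (∫⁻ z, A.indicator (fun _ => ENNReal.ofReal a) z) +
      ∫⁻ z, ∑' k : ℕ, (W k).indicator (fun _ => ENNReal.ofReal (a * e ^ (k + 1))) z :=
    lintegral_add_left (measurable_const.indicator Metric.isClosed_closedBall.measurableSet) _
  rw [hsplit]
  have h1 : (∫⁻ z, A.indicator (fun _ => ENNReal.ofReal a) z)
      ≤ ENNReal.ofReal a * ENNReal.ofReal ((2 * R) ^ n) := by
    rw [lintegral_indicator Metric.isClosed_closedBall.measurableSet, setLIntegral_const]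
    rw [Real.volume_pi_closedBall c hR.le]
    simp [Fintype.card_fin]
  have h2 : (∫⁻ z, ∑' k : ℕ, (W k).indicator (fun _ => ENNReal.ofReal (a * e ^ (k + 1))) z)
      ≤ ENNReal.ofReal (a * (4 * R) ^ n * e) * (1 - ENNReal.ofReal (2 ^ n * e))⁻¹ := by
    rw [lintegral_tsum (fun k => (measurable_const.indicator (hWmeas k)).aemeasurable)]
    have hterm : ∀ k : ℕ,
        (∫⁻ z, (W k).indicator (fun _ => ENNReal.ofReal (a * e ^ (k + 1))) z)
          ≤ ENNReal.ofReal (a * (4 * R) ^ n * e) * (ENNReal.ofReal (2 ^ n * e)) ^ k := by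
      intro k
      rw [lintegral_indicator (hWmeas k), setLIntegral_const]
      have hvol : volume (W k) ≤ ENNReal.ofReal ((2 * (2 ^ (k + 1) * R)) ^ n) := by
        refine le_trans (measure_mono Set.diff_subset) ?_
        rw [Real.volume_pi_closedBall c (by positivity)]
        simp [Fintype.card_fin]
      refine le_trans (mul_le_mul_right hvol _) ?_
      rw [← ENNReal.ofReal_mul (by positivity), ← ENNReal.ofReal_pow (by positivity),
        ← ENNReal.ofReal_mul (by positivity)]
      refine ENNReal.ofReal_le_ofReal (le_of_eq ?_)
      ring
    refine le_trans (ENNReal.tsum_le_tsum hterm) ?_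
    rw [ENNReal.tsum_mul_left, ENNReal.tsum_geometric]
  refine le_trans (add_le_add h1 h2) ?_
  have hinv : (1 - ENNReal.ofReal (2 ^ n * e))⁻¹ = ENNReal.ofReal ((1 - 2 ^ n * e)⁻¹) := by
    rw [← ENNReal.ofReal_one, ← ENNReal.ofReal_sub _ (mul_nonneg (by positivity) he0),
      ENNReal.ofReal_inv_of_pos (by linarith)]
  have hbn : (0:ℝ) ≤ (1 - 2 ^ n * e)⁻¹ := le_of_lt (by
    have : (0:ℝ) < 1 - 2 ^ n * e := by linarith
    positivity)
  have hae : (0:ℝ) ≤ a * (4 * R) ^ n * e := mul_nonneg (mul_nonneg ha (by positivity)) he0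
  rw [hinv, ← ENNReal.ofReal_mul ha, ← ENNReal.ofReal_mul hae,
    ← ENNReal.ofReal_add (mul_nonneg ha (by positivity)) (mul_nonneg hae hbn)]
  refine ENNReal.ofReal_le_ofReal (le_of_eq ?_)
  ring

lemma sq_rpow_neg_half {n : ℕ} {s : ℝ} (hs : 0 < s) :
    (s ^ 2 : ℝ) ^ (-(n : ℝ) / 2) = (s ^ n)⁻¹ := by
  rw [← Real.rpow_natCast s 2, ← Real.rpow_mul hs.le]
  push_cast
  rw [show (2:ℝ) * (-(n:ℝ) / 2) = -(n:ℝ) by ring, Real.rpow_neg hs.le, Real.rpow_natCast]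

lemma four_pow_ge {k : ℕ} : (k : ℝ) + 1 ≤ 4 ^ k := by
  induction k with
  | zero => norm_num
  | succ m ih =>
    have h4 : (1:ℝ) ≤ 4 ^ m := one_le_pow₀ (by norm_num)
    push_cast
    rw [pow_succ]
    push_cast at ih
    nlinarith

lemma near_bound {n : ℕ} {Ω : Set (Fin n → ℝ)} (hΩm : MeasurableSet Ω)
    {K : ℝ → (Fin n → ℝ) → (Fin n → ℝ) → ℂ} {C₀ α : ℝ} (hC₀ : 0 < C₀) (hα : 0 < α)
    (hsize : ∀ t : ℝ, 0 < t → ∀ x ∈ Ω, ∀ y ∈ closure Ω,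
      ‖K t x y‖ ≤ C₀ * t ^ (-(n : ℝ) / 2) * Real.exp (-(α * dist x y ^ 2 / t)))
    {b : (Fin n → ℝ) → ℂ} {B : ℝ} (hB : 0 ≤ B) (hb : ∀ᵐ z, ‖b z‖ ≤ B)
    {y : Fin n → ℝ} (hy : y ∈ Ω) {s : ℝ} (hs : 0 < s) :
    ‖∫ z in Ω, K (s ^ 2) y z * b z‖ ≤
      B * (C₀ * (2 ^ (n + 1) * Real.sqrt (((n : ℝ) + 1) * Real.log 2 / α) ^ n)) := by
  set L : ℝ := Real.sqrt (((n : ℝ) + 1) * Real.log 2 / α) with hLdef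
  have hlog2 : 0 < Real.log 2 := Real.log_pos one_lt_two
  have hL : 0 < L := Real.sqrt_pos.2 (by positivity)
  have hL2 : L ^ 2 = ((n : ℝ) + 1) * Real.log 2 / α := Real.sq_sqrt (by positivity)
  have hsn : (0:ℝ) < s ^ n := by positivity
  set a : ℝ := B * (C₀ * (s ^ n)⁻¹) with hadef
  have ha : 0 ≤ a := by positivity
  set e : ℝ := ((2:ℝ) ^ (n + 1))⁻¹ with hedef
  have he0 : (0:ℝ) ≤ e := by positivity
  have he1 : 2 ^ n * e < 1 := by
    rw [hedef, pow_succ]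
    rw [mul_inv, ← mul_assoc, mul_inv_cancel₀ (by positivity)]
    norm_num
  set f : (Fin n → ℝ) → ℝ≥0∞ := fun z =>
    ENNReal.ofReal (B * (C₀ * (s ^ n)⁻¹ * Real.exp (-(α * dist y z ^ 2 / s ^ 2)))) with hfdef
  -- step 1 : pointwise domination a.e. on Ω
  have h2 : (∫⁻ z in Ω, ENNReal.ofReal ‖K (s ^ 2) y z * b z‖) ≤ ∫⁻ z in Ω, f z := by
    refine lintegral_mono_ae ?_
    filter_upwards [ae_restrict_mem hΩm, ae_restrict_of_ae hb] with z hzΩ hzb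
    refine ENNReal.ofReal_le_ofReal ?_
    rw [norm_mul]
    have hK := hsize (s ^ 2) (by positivity) y hy z (subset_closure hzΩ)
    rw [sq_rpow_neg_half hs] at hK
    have h1 : ‖K (s ^ 2) y z‖ * ‖b z‖ ≤
        (C₀ * (s ^ n)⁻¹ * Real.exp (-(α * dist y z ^ 2 / s ^ 2))) * B := by
      refine mul_le_mul ?_ hzb (norm_nonneg _) (by positivity)
      exact hK
    calc ‖K (s ^ 2) y z‖ * ‖b z‖ ≤ _ := h1
      _ = B * (C₀ * (s ^ n)⁻¹ * Real.exp (-(α * dist y z ^ 2 / s ^ 2))) := by ring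
  -- step 2 : extend to all of ℝⁿ and apply the annuli lemma
  have h3 : (∫⁻ z, f z) ≤ ENNReal.ofReal
      (a * ((2 * (L * s)) ^ n + (4 * (L * s)) ^ n * (e * (1 - 2 ^ n * e)⁻¹))) := by
    refine master_annuli y (by positivity : 0 < L * s) ha he0 he1 f ?_ ?_
    · intro z
      refine ENNReal.ofReal_le_ofReal ?_
      rw [hadef]
      have : Real.exp (-(α * dist y z ^ 2 / s ^ 2)) ≤ 1 :=
        Real.exp_le_one_iff.2 (neg_nonpos.2 (by positivity))
      nlinarith [Real.exp_pos (-(α * dist y z ^ 2 / s ^ 2)), mul_pos hC₀ (inv_pos.2 hsn)]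
    · intro k z hz
      refine ENNReal.ofReal_le_ofReal ?_
      have hd : 0 < dist z y := lt_trans (by positivity) hz
      have hdsq : (2 ^ k * (L * s)) ^ 2 < dist z y ^ 2 := by
        have h0 : (0:ℝ) ≤ 2 ^ k * (L * s) := by positivity
        nlinarith
      have hexp : Real.exp (-(α * dist y z ^ 2 / s ^ 2)) ≤ e ^ (k + 1) := by
        have harg : ((k:ℝ) + 1) * (((n:ℝ) + 1) * Real.log 2) ≤ α * dist y z ^ 2 / s ^ 2 := by
          have h1 : α * ((2:ℝ) ^ k * (L * s)) ^ 2 / s ^ 2 ≤ α * dist y z ^ 2 / s ^ 2 := by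
            rw [dist_comm y z]
            gcongr
          refine le_trans ?_ h1
          have h4k : ((2:ℝ) ^ k) ^ 2 = 4 ^ k := by
            rw [← pow_mul, show k * 2 = 2 * k by ring, pow_mul]; norm_num
          have h2 : α * ((2:ℝ) ^ k * (L * s)) ^ 2 / s ^ 2 = (4:ℝ) ^ k * (α * L ^ 2) := by
            rw [mul_pow, mul_pow, h4k]
            field_simp
          rw [h2, hL2]
          have hc : α * (((n:ℝ) + 1) * Real.log 2 / α) = ((n:ℝ) + 1) * Real.log 2 := by
            field_simp
          rw [hc]
          have h3 : ((k:ℝ) + 1) ≤ (4:ℝ) ^ k := four_pow_ge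
          exact mul_le_mul_of_nonneg_right h3 (by positivity)
        have hmono : Real.exp (-(α * dist y z ^ 2 / s ^ 2)) ≤
            Real.exp (-(((k:ℝ) + 1) * (((n:ℝ) + 1) * Real.log 2))) := by
          apply Real.exp_le_exp.2
          linarith
        refine le_trans hmono ?_
        have hcalc : Real.exp (-(((k:ℝ) + 1) * (((n:ℝ) + 1) * Real.log 2))) = e ^ (k + 1) := by
          rw [hedef]
          rw [show -(((k:ℝ) + 1) * (((n:ℝ) + 1) * Real.log 2)) =
            Real.log 2 * (-(((n:ℝ) + 1) * ((k:ℝ) + 1))) by ring]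
          rw [Real.exp_mul, Real.exp_log two_pos]
          rw [show (-(((n:ℝ) + 1) * ((k:ℝ) + 1))) = (-1 : ℝ) * ((((n:ℕ) + 1) * ((k:ℕ) + 1) : ℕ) : ℝ)
            by push_cast; ring]
          rw [Real.rpow_mul (by norm_num : (0:ℝ) ≤ 2), Real.rpow_natCast,
            Real.rpow_neg_one, ← inv_pow, pow_mul]
        rw [← hcalc]
      calc B * (C₀ * (s ^ n)⁻¹ * Real.exp (-(α * dist y z ^ 2 / s ^ 2)))
          ≤ B * (C₀ * (s ^ n)⁻¹ * e ^ (k + 1)) := by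
            have h0 : (0:ℝ) ≤ C₀ * (s ^ n)⁻¹ := by positivity
            nlinarith [mul_nonneg hB h0]
        _ = a * e ^ (k + 1) := by rw [hadef]; ring
  -- step 3 : chain them
  have hnorm : ‖∫ z in Ω, K (s ^ 2) y z * b z‖ =
      ‖∫ z in Ω, K (s ^ 2) y z * b z‖ := rfl
  rw [hnorm]
  refine le_trans (norm_integral_le_lintegral_norm _) ?_
  have hfinal : (∫⁻ z in Ω, ENNReal.ofReal ‖K (s ^ 2) y z * b z‖) ≤ ENNReal.ofReal
      (a * ((2 * (L * s)) ^ n + (4 * (L * s)) ^ n * (e * (1 - 2 ^ n * e)⁻¹))) :=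
    le_trans (le_trans h2 (setLIntegral_le_lintegral _ _)) h3
  have harith : a * ((2 * (L * s)) ^ n + (4 * (L * s)) ^ n * (e * (1 - 2 ^ n * e)⁻¹))
      ≤ B * (C₀ * (2 ^ (n + 1) * L ^ n)) := by
    have he2 : (1:ℝ) - 2 ^ n * e = 1/2 := by
      rw [hedef, pow_succ, mul_inv, ← mul_assoc, mul_inv_cancel₀ (by positivity)]
      norm_num
    have he3 : e * ((1:ℝ) - 2 ^ n * e)⁻¹ = (2 ^ n)⁻¹ := by
      rw [he2, hedef, pow_succ]
      norm_num
      ring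
    rw [he3, hadef]
    have hexpand : ((2 * (L * s)) ^ n + (4 * (L * s)) ^ n * ((2:ℝ) ^ n)⁻¹)
        = 2 ^ (n + 1) * L ^ n * s ^ n := by
      rw [mul_pow, mul_pow, mul_pow]
      rw [show (4:ℝ) ^ n = 2 ^ n * 2 ^ n by rw [← mul_pow]; norm_num]
      rw [pow_succ]
      field_simp
      ring
    rw [hexpand]
    rw [show B * (C₀ * (s ^ n)⁻¹) * (2 ^ (n + 1) * L ^ n * s ^ n)
      = (B * (C₀ * (2 ^ (n + 1) * L ^ n))) * ((s ^ n)⁻¹ * s ^ n) by ring,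
      inv_mul_cancel₀ (ne_of_gt hsn), mul_one]
  exact ENNReal.toReal_le_of_le_ofReal (by positivity)
    (le_trans hfinal (ENNReal.ofReal_le_ofReal harith))

lemma far_core {n : ℕ} {Ω : Set (Fin n → ℝ)} (hΩm : MeasurableSet Ω)
    {K : ℝ → (Fin n → ℝ) → (Fin n → ℝ) → ℂ} {C₀ α μ μ' : ℝ}
    (hC₀ : 0 < C₀) (hα : 0 < α) (hμ : μ ∈ Set.Ioc (0:ℝ) 1)
    (hμ'0 : 0 < μ') (hμ'μ : μ' < μ)
    (hsize : ∀ t : ℝ, 0 < t → ∀ x ∈ Ω, ∀ y ∈ closure Ω,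
      ‖K t x y‖ ≤ C₀ * t ^ (-(n : ℝ) / 2) * Real.exp (-(α * dist x y ^ 2 / t)))
    (hhold : ∀ t : ℝ, 0 < t → ∀ x ∈ Ω, ∀ y₁ ∈ closure Ω, ∀ y₂ ∈ closure Ω,
      ‖K t x y₁ - K t x y₂‖ ≤
        C₀ * t ^ (-(n : ℝ) / 2) * (dist y₁ y₂ / Real.sqrt t) ^ μ)
    (hdir : ∀ t : ℝ, 0 < t → ∀ x ∈ Ω, ∀ y ∈ frontier Ω, K t x y = 0)
    {x₀ : Fin n → ℝ} {r₀ : ℝ} (hr₀ : 0 < r₀)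
    {z₀ : Fin n → ℝ} (hz₀ : z₀ ∈ Metric.closedBall x₀ (r₀ / 2) ∩ frontier Ω)
    {b : (Fin n → ℝ) → ℂ} {B : ℝ} (hB : 0 ≤ B) (hb : ∀ᵐ z, ‖b z‖ ≤ B)
    (hsupp : Function.support b ⊆ Metric.closedBall x₀ (r₀ / 2) ∩ Ω)
    {y : Fin n → ℝ} (hy : y ∈ Ω) {s : ℝ} (hs : 0 < s)
    {E : ℝ}
    (hE : ∀ z ∈ Metric.closedBall x₀ (r₀ / 2),
      Real.exp (-((1 - μ' / μ) * α * dist y z ^ 2 / s ^ 2)) ≤ E) :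
    ‖∫ z in Ω, K (s ^ 2) y z * b z‖ ≤
      B * (C₀ * (s ^ n)⁻¹ * (r₀ / s) ^ μ' * E * r₀ ^ n) := by
  obtain ⟨hμ0, hμ1⟩ := hμ
  set θ : ℝ := μ' / μ with hθdef
  have hθ0 : 0 < θ := div_pos hμ'0 hμ0
  have hθ1 : θ < 1 := (div_lt_one hμ0).2 hμ'μ
  have hsn : (0:ℝ) < s ^ n := by positivity
  have hE0 : 0 ≤ E := le_trans (Real.exp_pos _).le
    (hE x₀ (Metric.mem_closedBall_self (by positivity)))
  set W : ℝ := C₀ * (s ^ n)⁻¹ * (r₀ / s) ^ μ' * E with hWdef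
  have hW0 : 0 ≤ W := by positivity
  set Q : Set (Fin n → ℝ) := Metric.closedBall x₀ (r₀ / 2) with hQ
  -- pointwise bound
  have h2 : (∫⁻ z in Ω, ENNReal.ofReal ‖K (s ^ 2) y z * b z‖) ≤
      ∫⁻ z in Ω, Q.indicator (fun _ => ENNReal.ofReal (B * W)) z := by
    refine lintegral_mono_ae ?_
    filter_upwards [ae_restrict_mem hΩm, ae_restrict_of_ae hb] with z hzΩ hzb
    by_cases hzQ : z ∈ Q
    · rw [Set.indicator_of_mem hzQ]
      refine ENNReal.ofReal_le_ofReal ?_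
      rw [norm_mul]
      -- kernel bounds
      have hzc : z ∈ closure Ω := subset_closure hzΩ
      have hz₀c : z₀ ∈ closure Ω := frontier_subset_closure hz₀.2
      have hk1 : ‖K (s ^ 2) y z‖ ≤
          C₀ * (s ^ n)⁻¹ * Real.exp (-(α * dist y z ^ 2 / s ^ 2)) := by
        have h := hsize (s ^ 2) (by positivity) y hy z hzc
        rwa [sq_rpow_neg_half hs] at h
      have hdir0 : K (s ^ 2) y z₀ = 0 := hdir _ (by positivity) y hy z₀ hz₀.2
      have hk2 : ‖K (s ^ 2) y z‖ ≤
          C₀ * (s ^ n)⁻¹ * (dist z z₀ / s) ^ μ := by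
        have h := hhold (s ^ 2) (by positivity) y hy z hzc z₀ hz₀c
        rwa [hdir0, sub_zero, sq_rpow_neg_half hs, Real.sqrt_sq hs.le] at h
      set G1 : ℝ := Real.exp (-(α * dist y z ^ 2 / s ^ 2)) with hG1def
      set G2 : ℝ := (dist z z₀ / s) ^ μ with hG2def
      have hG10 : 0 ≤ G1 := (Real.exp_pos _).le
      have hG20 : 0 ≤ G2 := Real.rpow_nonneg (div_nonneg dist_nonneg hs.le) _
      have hCpos : (0:ℝ) < C₀ * (s ^ n)⁻¹ := by positivity
      have hmin : ‖K (s ^ 2) y z‖ ≤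
          C₀ * (s ^ n)⁻¹ * (G1 ^ (1 - θ) * G2 ^ θ) := by
        have hint : min G1 G2 ≤ G1 ^ (1 - θ) * G2 ^ θ :=
          le_rpow_interp (le_min hG10 hG20) (min_le_left _ _) (min_le_right _ _) hθ0 hθ1
        have hm : ‖K (s ^ 2) y z‖ ≤ C₀ * (s ^ n)⁻¹ * min G1 G2 := by
          rcases le_total G1 G2 with h | h
          · rw [min_eq_left h]; exact hk1
          · rw [min_eq_right h]; exact hk2
        exact le_trans hm (mul_le_mul_of_nonneg_left hint hCpos.le)
      have hG1eq : G1 ^ (1 - θ) = Real.exp (-((1 - θ) * α * dist y z ^ 2 / s ^ 2)) := by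
        rw [hG1def, ← Real.exp_mul]
        congr 1; ring
      have hG2eq : G2 ^ θ = (dist z z₀ / s) ^ μ' := by
        rw [hG2def, ← Real.rpow_mul (div_nonneg dist_nonneg hs.le)]
        congr 1
        rw [hθdef]
        field_simp
      have hdzz : dist z z₀ ≤ r₀ := by
        have ha1 : dist z x₀ ≤ r₀ / 2 := Metric.mem_closedBall.1 hzQ
        have ha2 : dist z₀ x₀ ≤ r₀ / 2 := Metric.mem_closedBall.1 hz₀.1
        calc dist z z₀ ≤ dist z x₀ + dist x₀ z₀ := dist_triangle _ _ _
          _ ≤ r₀ / 2 + r₀ / 2 := by rw [dist_comm x₀ z₀]; exact add_le_add ha1 ha2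
          _ = r₀ := by ring
      have hG2le : (dist z z₀ / s) ^ μ' ≤ (r₀ / s) ^ μ' :=
        Real.rpow_le_rpow (div_nonneg dist_nonneg hs.le) (by gcongr) hμ'0.le
      have hG1le : Real.exp (-((1 - θ) * α * dist y z ^ 2 / s ^ 2)) ≤ E := hE z hzQ
      have hprod : G1 ^ (1 - θ) * G2 ^ θ ≤ E * (r₀ / s) ^ μ' := by
        rw [hG1eq, hG2eq]
        exact mul_le_mul hG1le hG2le (Real.rpow_nonneg (div_nonneg dist_nonneg hs.le) _)
          hE0
      have hKW : ‖K (s ^ 2) y z‖ ≤ W := by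
        refine le_trans hmin ?_
        rw [hWdef]
        calc C₀ * (s ^ n)⁻¹ * (G1 ^ (1 - θ) * G2 ^ θ)
            ≤ C₀ * (s ^ n)⁻¹ * (E * (r₀ / s) ^ μ') :=
              mul_le_mul_of_nonneg_left hprod hCpos.le
          _ = C₀ * (s ^ n)⁻¹ * (r₀ / s) ^ μ' * E := by ring
      calc ‖K (s ^ 2) y z‖ * ‖b z‖ ≤ W * B := by
            refine mul_le_mul ?_ hzb (norm_nonneg _) hW0
            exact hKW
        _ = B * W := by ring
    · have hbz : b z = 0 := by
        by_contra hne
        exact hzQ (hsupp (Function.mem_support.2 hne)).1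
      rw [hbz, mul_zero, norm_zero, ENNReal.ofReal_zero]
      exact zero_le'
  -- integrate
  have h3 : (∫⁻ z in Ω, Q.indicator (fun _ => ENNReal.ofReal (B * W)) z) ≤
      ENNReal.ofReal (B * W * r₀ ^ n) := by
    refine le_trans (setLIntegral_le_lintegral _ _) ?_
    rw [lintegral_indicator Metric.isClosed_closedBall.measurableSet, setLIntegral_const]
    rw [Real.volume_pi_closedBall x₀ (by positivity)]
    rw [show (2 * (r₀ / 2)) = r₀ by ring, Fintype.card_fin,
      ← ENNReal.ofReal_mul (by positivity)]
  have hnorm : ‖∫ z in Ω, K (s ^ 2) y z * b z‖ =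
      ‖∫ z in Ω, K (s ^ 2) y z * b z‖ := rfl
  rw [hnorm]
  refine le_trans (norm_integral_le_lintegral_norm _) ?_
  refine ENNReal.toReal_le_of_le_ofReal (by positivity) ?_
  refine le_trans (le_trans h2 h3) (ENNReal.ofReal_le_ofReal (le_of_eq (by rw [hWdef]; ring)))

lemma far_elem {n : ℕ} {Ω : Set (Fin n → ℝ)} (hΩm : MeasurableSet Ω)
    {K : ℝ → (Fin n → ℝ) → (Fin n → ℝ) → ℂ} {C₀ α μ μ' : ℝ}
    (hC₀ : 0 < C₀) (hα : 0 < α) (hμ : μ ∈ Set.Ioc (0:ℝ) 1)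
    (hμ'0 : 0 < μ') (hμ'μ : μ' < μ)
    (hsize : ∀ t : ℝ, 0 < t → ∀ x ∈ Ω, ∀ y ∈ closure Ω,
      ‖K t x y‖ ≤ C₀ * t ^ (-(n : ℝ) / 2) * Real.exp (-(α * dist x y ^ 2 / t)))
    (hhold : ∀ t : ℝ, 0 < t → ∀ x ∈ Ω, ∀ y₁ ∈ closure Ω, ∀ y₂ ∈ closure Ω,
      ‖K t x y₁ - K t x y₂‖ ≤
        C₀ * t ^ (-(n : ℝ) / 2) * (dist y₁ y₂ / Real.sqrt t) ^ μ)
    (hdir : ∀ t : ℝ, 0 < t → ∀ x ∈ Ω, ∀ y ∈ frontier Ω, K t x y = 0)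
    {x₀ : Fin n → ℝ} {r₀ : ℝ} (hr₀ : 0 < r₀)
    {z₀ : Fin n → ℝ} (hz₀ : z₀ ∈ Metric.closedBall x₀ (r₀ / 2) ∩ frontier Ω)
    {b : (Fin n → ℝ) → ℂ} {B : ℝ} (hB : 0 ≤ B) (hb : ∀ᵐ z, ‖b z‖ ≤ B)
    (hsupp : Function.support b ⊆ Metric.closedBall x₀ (r₀ / 2) ∩ Ω)
    {y : Fin n → ℝ} (hy : y ∈ Ω) {s : ℝ} (hs : 0 < s)
    {x : Fin n → ℝ} (hD : 2 * r₀ < dist x x₀) (hxy : dist x y < s) :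
    ‖∫ z in Ω, K (s ^ 2) y z * b z‖ ≤
      B * ((C₀ * max ((4:ℝ) ^ ((n:ℝ) + μ'))
          (((n+1)! : ℝ) * (4 / ((1 - μ' / μ) * α)) ^ (n + 1))) *
        (r₀ / dist x x₀) ^ ((n:ℝ) + μ')) := by
  set D : ℝ := dist x x₀ with hDdef
  have hD0 : 0 < D := lt_trans (by positivity) hD
  set β : ℝ := (1 - μ' / μ) * α with hβdef
  have hθ1 : μ' / μ < 1 := (div_lt_one hμ.1).2 hμ'μ
  have hβ0 : 0 < β := mul_pos (by linarith) hα
  set c : ℝ := (n:ℝ) + μ' with hcdef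
  have hc0 : 0 < c := by positivity
  set M : ℝ := max ((4:ℝ) ^ ((n:ℝ) + μ')) (((n+1)! : ℝ) * (4 / β) ^ (n + 1)) with hMdef
  have hrs : 0 < r₀ / s := div_pos hr₀ hs
  have hmerge : (s ^ n)⁻¹ * (r₀ / s) ^ μ' * r₀ ^ n = (r₀ / s) ^ c := by
    rw [hcdef, Real.rpow_add hrs, Real.rpow_natCast, div_pow]
    field_simp
  rcases le_or_gt (D / 4) s with hcase | hcase
  · -- wide cones / large time
    have h1 := far_core hΩm hC₀ hα hμ hμ'0 hμ'μ hsize hhold hdir hr₀ hz₀ hB hb hsupp hy hs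
      (E := 1) (fun z _ => Real.exp_le_one_iff.2 (neg_nonpos.2 (by positivity)))
    refine le_trans h1 ?_
    rw [mul_one (C₀ * (s ^ n)⁻¹ * (r₀ / s) ^ μ')]
    rw [show C₀ * (s ^ n)⁻¹ * (r₀ / s) ^ μ' * r₀ ^ n
        = C₀ * ((s ^ n)⁻¹ * (r₀ / s) ^ μ' * r₀ ^ n) by ring, hmerge]
    refine mul_le_mul_of_nonneg_left ?_ hB
    have h2 : (r₀ / s) ^ c ≤ (4 * (r₀ / D)) ^ c := by
      refine Real.rpow_le_rpow hrs.le ?_ hc0.le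
      rw [div_le_iff₀ hs]
      have : 4 * (r₀ / D) * s = 4 * r₀ * (s / D) := by ring
      rw [this]
      have hsD : 1 / 4 ≤ s / D := by
        rw [le_div_iff₀ hD0]
        linarith [hcase]
      nlinarith
    refine le_trans (mul_le_mul_of_nonneg_left h2 hC₀.le) ?_
    rw [Real.mul_rpow (by norm_num) (div_nonneg hr₀.le hD0.le)]
    have h4c : (4:ℝ) ^ c ≤ M := le_max_left _ _
    have hrD : (0:ℝ) ≤ (r₀ / D) ^ c := Real.rpow_nonneg (div_nonneg hr₀.le hD0.le) _
    calc C₀ * ((4:ℝ) ^ c * (r₀ / D) ^ c) ≤ C₀ * (M * (r₀ / D) ^ c) := by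
          refine mul_le_mul_of_nonneg_left (mul_le_mul_of_nonneg_right h4c hrD) hC₀.le
      _ = C₀ * M * (r₀ / D) ^ c := by ring
  · -- far away / small time
    set E : ℝ := Real.exp (-(β * (D / 2) ^ 2 / s ^ 2)) with hEdef
    have hEbound : ∀ z ∈ Metric.closedBall x₀ (r₀ / 2),
        Real.exp (-((1 - μ' / μ) * α * dist y z ^ 2 / s ^ 2)) ≤ E := by
      intro z hz
      have hdylb : D / 2 ≤ dist y z := by
        have t1 : dist x x₀ ≤ dist x y + dist y z + dist z x₀ := by
          calc dist x x₀ ≤ dist x z + dist z x₀ := dist_triangle _ _ _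
            _ ≤ (dist x y + dist y z) + dist z x₀ := by
                have := dist_triangle x y z
                linarith
        have t2 : dist z x₀ ≤ r₀ / 2 := Metric.mem_closedBall.1 hz
        have t3 : r₀ / 2 < D / 4 := by linarith
        have t4 : dist x y < D / 4 := lt_trans hxy hcase
        linarith
      rw [hEdef]
      refine Real.exp_le_exp.2 ?_
      rw [← hβdef]
      have hsq : (D / 2) ^ 2 ≤ dist y z ^ 2 := by
        have h0 : (0:ℝ) ≤ D / 2 := by positivity
        nlinarith
      have : β * (D / 2) ^ 2 / s ^ 2 ≤ β * dist y z ^ 2 / s ^ 2 := by gcongr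
      linarith
    have h1 := far_core hΩm hC₀ hα hμ hμ'0 hμ'μ hsize hhold hdir hr₀ hz₀ hB hb hsupp hy hs
      hEbound
    refine le_trans h1 ?_
    refine mul_le_mul_of_nonneg_left ?_ hB
    rw [show C₀ * (s ^ n)⁻¹ * (r₀ / s) ^ μ' * E * r₀ ^ n
        = C₀ * (((s ^ n)⁻¹ * (r₀ / s) ^ μ' * r₀ ^ n) * E) by ring, hmerge]
    have hx0 : 0 < β * (D / 2) ^ 2 / s ^ 2 := by positivity
    have hEle : E ≤ ((n+1)! : ℝ) * (4 / β) ^ (n + 1) * ((s / D) ^ (2 * (n + 1)) : ℝ) := by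
      rw [hEdef]
      refine le_trans (exp_neg_le_factorial_div (n + 1) hx0) (le_of_eq ?_)
      have hx : (β * (D / 2) ^ 2 / s ^ 2)⁻¹ = (4 / β) * ((s / D) ^ 2) := by
        field_simp
        ring
      rw [div_eq_mul_inv, ← inv_pow, hx, mul_pow, ← pow_mul]
      ring
    have hsD1 : 0 < s / D := by positivity
    have hsD2 : s / D ≤ 1 := by
      rw [div_le_one hD0]
      nlinarith
    have hpow : ((s / D) ^ (2 * (n + 1)) : ℝ) ≤ (s / D) ^ c := by
      rw [← Real.rpow_natCast (s / D) (2 * (n + 1))]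
      refine Real.rpow_le_rpow_of_exponent_ge hsD1 hsD2 ?_
      rw [hcdef]
      push_cast
      have := hμ'μ
      have := hμ.2
      linarith
    have hfin : (r₀ / s) ^ c * E ≤ ((n+1)! : ℝ) * (4 / β) ^ (n + 1) * (r₀ / D) ^ c := by
      have hE0 : 0 ≤ E := (Real.exp_pos _).le
      have hstep : (r₀ / s) ^ c * E ≤
          (r₀ / s) ^ c * (((n+1)! : ℝ) * (4 / β) ^ (n + 1) * (s / D) ^ c) := by
        refine mul_le_mul_of_nonneg_left (le_trans hEle ?_) (Real.rpow_nonneg hrs.le _)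
        exact mul_le_mul_of_nonneg_left hpow (by positivity)
      refine le_trans hstep ?_
      rw [show (r₀ / s) ^ c * (((n+1)! : ℝ) * (4 / β) ^ (n + 1) * (s / D) ^ c)
          = ((n+1)! : ℝ) * (4 / β) ^ (n + 1) * ((r₀ / s) ^ c * (s / D) ^ c) by ring]
      rw [← Real.mul_rpow (div_nonneg hr₀.le hs.le) hsD1.le]
      rw [show r₀ / s * (s / D) = r₀ / D by field_simp]
    calc C₀ * ((r₀ / s) ^ c * E)
        ≤ C₀ * (((n+1)! : ℝ) * (4 / β) ^ (n + 1) * (r₀ / D) ^ c) :=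
          mul_le_mul_of_nonneg_left hfin hC₀.le
      _ ≤ C₀ * M * (r₀ / D) ^ c := by
          have hM2 : ((n+1)! : ℝ) * (4 / β) ^ (n + 1) ≤ M := le_max_right _ _
          have hrD : (0:ℝ) ≤ (r₀ / D) ^ c := Real.rpow_nonneg (div_nonneg hr₀.le hD0.le) _
          calc C₀ * (((n+1)! : ℝ) * (4 / β) ^ (n + 1) * (r₀ / D) ^ c)
              = C₀ * (((n+1)! : ℝ) * (4 / β) ^ (n + 1)) * (r₀ / D) ^ c := by ring
            _ ≤ C₀ * M * (r₀ / D) ^ c :=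
                mul_le_mul_of_nonneg_right (mul_le_mul_of_nonneg_left hM2 hC₀.le) hrD

set_option maxHeartbeats 1000000 in
theorem stmt14 (n : ℕ) (hn : 1 ≤ n) (μ : ℝ) (hμ : μ ∈ Set.Ioc (0:ℝ) 1)
    (C₀ α : ℝ) (hC₀ : 0 < C₀) (hα : 0 < α)
    (p : ℝ) (hp : p ∈ Set.Ioc ((n : ℝ) / (n + μ)) 1) (C₁ : ℝ) (hC₁ : 1 ≤ C₁) :
    ∃ C : ℝ, 0 < C ∧
    ∀ Φ : ℝ → ℝ, MonotoneOn Φ (Set.Ioi 0) → (∀ t ∈ Set.Ioi (0:ℝ), 0 < Φ t) → Φ 0 = 0 →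
      (∀ s ∈ Set.Ioi (0:ℝ), ∀ t : ℝ, 1 ≤ t → Φ (s * t) ≤ C₁ * t * Φ s) →
      (∀ s ∈ Set.Ioi (0:ℝ), ∀ t ∈ Set.Ioo (0:ℝ) 1, Φ (s * t) ≤ t ^ p * Φ s) →
    ∀ (Ω : Set (Fin n → ℝ)), IsOpen Ω →
    ∀ K : ℝ → (Fin n → ℝ) → (Fin n → ℝ) → ℂ,
      Measurable (fun q : ℝ × (Fin n → ℝ) × (Fin n → ℝ) => K q.1 q.2.1 q.2.2) →
      (∀ t : ℝ, 0 < t → ∀ x ∈ Ω, ∀ y ∈ closure Ω,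
        ‖K t x y‖ ≤
          C₀ * t ^ (-(n : ℝ) / 2) * Real.exp (-(α * dist x y ^ 2 / t))) →
      (∀ t : ℝ, 0 < t → ∀ x ∈ Ω, ∀ y₁ ∈ closure Ω, ∀ y₂ ∈ closure Ω,
        ‖K t x y₁ - K t x y₂‖ ≤
          C₀ * t ^ (-(n : ℝ) / 2) * (dist y₁ y₂ / Real.sqrt t) ^ μ) →
      (∀ t : ℝ, 0 < t → ∀ x ∈ Ω, ∀ y ∈ frontier Ω, K t x y = 0) →
    ∀ (x₀ : Fin n → ℝ) (r₀ : ℝ), 0 < r₀ →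
      (Metric.closedBall x₀ (r₀ / 2) ∩ frontier Ω).Nonempty →
    ∀ b : (Fin n → ℝ) → ℂ, Measurable b → eLpNorm b ⊤ volume ≠ ⊤ →
      Function.support b ⊆ Metric.closedBall x₀ (r₀ / 2) ∩ Ω →
      (∫⁻ x in Ω, ENNReal.ofReal (Φ (nontangMax n Ω K b x))) ≤
        ENNReal.ofReal (C * r₀ ^ n * Φ ((eLpNorm b ⊤ volume).toReal)) := by
  -- basic facts about the parameters
  obtain ⟨hμ0, hμ1⟩ := hμ
  obtain ⟨hp1, hp2⟩ := hp
  have hn0 : (0:ℝ) < n := by exact_mod_cast hn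
  have hnμ : (0:ℝ) < (n:ℝ) + μ := by linarith
  have hp0 : 0 < p := lt_trans (div_pos hn0 hnμ) hp1
  have hkey : (n:ℝ) < p * ((n:ℝ) + μ) := (div_lt_iff₀ hnμ).1 hp1
  -- the auxiliary exponent μ'
  set μ' : ℝ := ((n:ℝ) * (1 - p) / p + μ) / 2 with hμ'def
  have hx0 : (0:ℝ) ≤ (n:ℝ) * (1 - p) / p := by
    apply div_nonneg _ hp0.le
    nlinarith
  have hxμ : (n:ℝ) * (1 - p) / p < μ := by
    rw [div_lt_iff₀ hp0]
    nlinarith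
  have hμ'0 : 0 < μ' := by rw [hμ'def]; linarith
  have hμ'μ : μ' < μ := by rw [hμ'def]; linarith
  set c : ℝ := (n:ℝ) + μ' with hcdef
  have hc0 : 0 < c := by positivity
  set q : ℝ := c * p with hqdef
  have hq : (n:ℝ) < q := by
    have h1 : (n:ℝ) * (1 - p) / p < μ' := by rw [hμ'def]; linarith
    have h2 : (n:ℝ) * (1 - p) < μ' * p := by
      rw [div_lt_iff₀ hp0] at h1; linarith
    rw [hqdef, hcdef]
    nlinarith
  -- the constants
  set L : ℝ := Real.sqrt (((n : ℝ) + 1) * Real.log 2 / α) with hLdef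
  set CnearC : ℝ := C₀ * (2 ^ (n + 1) * L ^ n) with hCnearC
  set CfarC : ℝ := C₀ * max ((4:ℝ) ^ ((n:ℝ) + μ'))
      (((n+1)! : ℝ) * (4 / ((1 - μ' / μ) * α)) ^ (n + 1)) with hCfarC
  set C₅ : ℝ := max CnearC CfarC with hC₅
  set C₅' : ℝ := max C₅ 1 with hC₅'
  have hC₅'1 : 1 ≤ C₅' := le_max_right _ _
  have hC₅'0 : 0 < C₅' := lt_of_lt_of_le one_pos hC₅'1
  set e : ℝ := (2:ℝ) ^ (-q) with hedef
  have he0 : 0 ≤ e := (Real.rpow_pos_of_pos two_pos _).le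
  have he1 : 2 ^ n * e < 1 := by
    rw [hedef, show ((2:ℝ) ^ n : ℝ) = (2:ℝ) ^ ((n:ℕ):ℝ) from (Real.rpow_natCast 2 n).symm,
      ← Real.rpow_add two_pos]
    exact Real.rpow_lt_one_of_one_lt_of_neg one_lt_two (by linarith)
  have hinv0 : (0:ℝ) ≤ (1 - 2 ^ n * e)⁻¹ := by
    have : (0:ℝ) < 1 - 2 ^ n * e := by linarith
    positivity
  refine ⟨C₁ * C₅' * (4 ^ n + 8 ^ n * (e * (1 - 2 ^ n * e)⁻¹)), ?_, ?_⟩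
  · have h4 : (0:ℝ) < 4 ^ n := by positivity
    have h8 : (0:ℝ) ≤ 8 ^ n * (e * (1 - 2 ^ n * e)⁻¹) :=
      mul_nonneg (by positivity) (mul_nonneg he0 hinv0)
    exact mul_pos (mul_pos (lt_of_lt_of_le one_pos hC₁) hC₅'0)
      (lt_of_lt_of_le h4 (le_add_of_nonneg_right h8))
  intro Φ hmono hΦpos hΦ0 hupper hlower Ω hΩ K hKmeas hsize hhold hdir x₀ r₀ hr₀ hQmeet
    b hbmeas hbtop hbsupp
  have hΩm : MeasurableSet Ω := hΩ.measurableSet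
  obtain ⟨z₀, hz₀⟩ := hQmeet
  set B : ℝ := (eLpNorm b ⊤ volume).toReal with hBdef
  have hB0 : 0 ≤ B := ENNReal.toReal_nonneg
  have hb_ae : ∀ᵐ z, ‖b z‖ ≤ B := by
    have h1 : ∀ᵐ z, (‖b z‖₊ : ℝ≥0∞) ≤ eLpNormEssSup b volume := ae_le_eLpNormEssSup
    filter_upwards [h1] with z hz
    have htop : eLpNormEssSup b volume ≠ ⊤ := by
      rwa [← eLpNorm_exponent_top]
    have h2 := ENNReal.toReal_mono htop hz
    rw [hBdef, eLpNorm_exponent_top]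
    simpa using h2
  -- element-level bounds
  have hel_near : ∀ y ∈ Ω, ∀ s : ℝ, 0 < s →
      ‖∫ z in Ω, K (s ^ 2) y z * b z‖ ≤ B * C₅' := by
    intro y hy s hs
    refine le_trans (near_bound hΩm hC₀ hα hsize hB0 hb_ae hy hs) ?_
    refine mul_le_mul_of_nonneg_left ?_ hB0
    exact le_trans (le_max_left CnearC CfarC) (le_max_left C₅ 1)
  have hel_far : ∀ x : Fin n → ℝ, 2 * r₀ < dist x x₀ → ∀ y ∈ Ω, ∀ s : ℝ, 0 < s →
      dist x y < s → ‖∫ z in Ω, K (s ^ 2) y z * b z‖ ≤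
        B * C₅' * (r₀ / dist x x₀) ^ c := by
    intro x hDx y hy s hs hxy
    refine le_trans (far_elem hΩm hC₀ hα ⟨hμ0, hμ1⟩ hμ'0 hμ'μ hsize hhold hdir hr₀ hz₀
      hB0 hb_ae hbsupp hy hs hDx hxy) ?_
    have hrD : (0:ℝ) ≤ (r₀ / dist x x₀) ^ c :=
      Real.rpow_nonneg (div_nonneg hr₀.le (by positivity)) _
    rw [show B * (CfarC * (r₀ / dist x x₀) ^ c) = B * CfarC * (r₀ / dist x x₀) ^ c by ring]
    refine mul_le_mul_of_nonneg_right (mul_le_mul_of_nonneg_left ?_ hB0) hrD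
    exact le_trans (le_max_right CnearC CfarC) (le_max_left C₅ 1)
  -- bounds on the maximal function
  have hN0 : ∀ x, 0 ≤ nontangMax n Ω K b x := by
    intro x
    apply Real.sSup_nonneg
    rintro v ⟨y, hy, t, ht, hxt, rfl⟩
    exact norm_nonneg _
  have hNnear : ∀ x, nontangMax n Ω K b x ≤ B * C₅' := by
    intro x
    apply Real.sSup_le _ (mul_nonneg hB0 hC₅'0.le)
    rintro v ⟨y, hy, t, ht, hxt, rfl⟩
    exact hel_near y hy t ht
  have hNfar : ∀ x, 2 * r₀ < dist x x₀ →
      nontangMax n Ω K b x ≤ B * C₅' * (r₀ / dist x x₀) ^ c := by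
    intro x hDx
    have hrD : (0:ℝ) ≤ (r₀ / dist x x₀) ^ c :=
      Real.rpow_nonneg (div_nonneg hr₀.le (by positivity)) _
    apply Real.sSup_le _ (mul_nonneg (mul_nonneg hB0 hC₅'0.le) hrD)
    rintro v ⟨y, hy, t, ht, hxt, rfl⟩
    exact hel_far x hDx y hy t ht hxt
  rcases eq_or_lt_of_le hB0 with hBeq | hBpos
  · -- degenerate case ‖b‖ = 0
    have hzero : ∀ x, nontangMax n Ω K b x = 0 := by
      intro x
      refine le_antisymm ?_ (hN0 x)
      have := hNnear x
      rw [← hBeq, zero_mul] at this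
      exact this
    have hlhs : ∀ x : Fin n → ℝ, ENNReal.ofReal (Φ (nontangMax n Ω K b x)) = 0 := by
      intro x
      rw [hzero x, hΦ0, ENNReal.ofReal_zero]
    calc (∫⁻ x in Ω, ENNReal.ofReal (Φ (nontangMax n Ω K b x)))
        = ∫⁻ _ in Ω, 0 := lintegral_congr fun x => hlhs x
      _ = 0 := lintegral_zero
      _ ≤ _ := zero_le'
  -- main case ‖b‖ > 0
  have hΦB : 0 < Φ B := hΦpos B hBpos
  set a : ℝ := C₁ * C₅' * Φ B with hadef
  have ha : 0 ≤ a := by positivity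
  have hBC : 0 < B * C₅' := mul_pos hBpos hC₅'0
  have hΦBC : Φ (B * C₅') ≤ C₁ * C₅' * Φ B := hupper B hBpos C₅' hC₅'1
  have hbase : ∀ x : Fin n → ℝ,
      ENNReal.ofReal (Φ (nontangMax n Ω K b x)) ≤ ENNReal.ofReal a := by
    intro x
    rcases (hN0 x).eq_or_lt with h0 | h0
    · rw [← h0, hΦ0, ENNReal.ofReal_zero]; exact zero_le'
    · refine ENNReal.ofReal_le_ofReal ?_
      refine le_trans (hmono h0 hBC (hNnear x)) hΦBC
  have hann : ∀ (k : ℕ) (x : Fin n → ℝ), 2 ^ k * (2 * r₀) < dist x x₀ →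
      ENNReal.ofReal (Φ (nontangMax n Ω K b x)) ≤ ENNReal.ofReal (a * e ^ (k + 1)) := by
    intro k x hd
    have hpk : (1:ℝ) ≤ 2 ^ k := one_le_pow₀ one_le_two
    have hD2 : 2 * r₀ < dist x x₀ := by
      have h := mul_le_mul_of_nonneg_right hpk (by positivity : (0:ℝ) ≤ 2 * r₀)
      rw [one_mul] at h
      linarith
    have hD0 : (0:ℝ) < dist x x₀ := lt_trans (by positivity) hD2
    set t : ℝ := (2:ℝ) ^ (-((k:ℝ) + 1) * c) with htdef
    have ht0 : 0 < t := Real.rpow_pos_of_pos two_pos _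
    have ht1 : t < 1 := by
      refine Real.rpow_lt_one_of_one_lt_of_neg one_lt_two ?_
      have : (0:ℝ) < ((k:ℝ) + 1) * c := by positivity
      linarith
    have hrDt : (r₀ / dist x x₀) ^ c ≤ t := by
      have h2 : (2:ℝ) ^ (k + 1) * r₀ < dist x x₀ := by
        calc (2:ℝ) ^ (k + 1) * r₀ = 2 ^ k * (2 * r₀) := by rw [pow_succ]; ring
          _ < dist x x₀ := hd
      have h1 : r₀ / dist x x₀ ≤ (2:ℝ) ^ (-((k:ℝ) + 1)) := by
        rw [Real.rpow_neg two_pos.le,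
          show ((k:ℝ) + 1) = (((k + 1 : ℕ)):ℝ) by push_cast; ring, Real.rpow_natCast]
        rw [div_le_iff₀ hD0, inv_mul_eq_div, le_div_iff₀ (by positivity)]
        nlinarith
      calc (r₀ / dist x x₀) ^ c ≤ ((2:ℝ) ^ (-((k:ℝ) + 1))) ^ c :=
            Real.rpow_le_rpow (div_nonneg hr₀.le hD0.le) h1 hc0.le
        _ = t := by rw [htdef, Real.rpow_mul two_pos.le]
    have hNt : nontangMax n Ω K b x ≤ B * C₅' * t :=
      le_trans (hNfar x hD2) (mul_le_mul_of_nonneg_left hrDt (mul_nonneg hB0 hC₅'0.le))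
    rcases (hN0 x).eq_or_lt with h0 | h0
    · rw [← h0, hΦ0, ENNReal.ofReal_zero]; exact zero_le'
    · refine ENNReal.ofReal_le_ofReal ?_
      have hBCt : 0 < B * C₅' * t := mul_pos hBC ht0
      have step1 : Φ (nontangMax n Ω K b x) ≤ Φ (B * C₅' * t) := hmono h0 hBCt hNt
      have step2 : Φ (B * C₅' * t) ≤ t ^ p * Φ (B * C₅') := by
        have := hlower (B * C₅') hBC t ⟨ht0, ht1⟩
        rwa [mul_assoc] at this ⊢
      have step3 : t ^ p * Φ (B * C₅') ≤ t ^ p * (C₁ * C₅' * Φ B) :=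
        mul_le_mul_of_nonneg_left hΦBC (Real.rpow_nonneg ht0.le _)
      have heq : t ^ p = e ^ (k + 1) := by
        rw [htdef, hedef, ← Real.rpow_natCast ((2:ℝ) ^ (-q)) (k + 1),
          ← Real.rpow_mul two_pos.le, ← Real.rpow_mul two_pos.le]
        congr 1
        push_cast
        rw [hqdef]
        ring
      calc Φ (nontangMax n Ω K b x) ≤ t ^ p * (C₁ * C₅' * Φ B) :=
            le_trans step1 (le_trans step2 step3)
        _ = a * e ^ (k + 1) := by rw [heq, hadef]; ring
  have hmaster := master_annuli x₀ (R := 2 * r₀) (by positivity) ha he0 he1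
    (fun x => ENNReal.ofReal (Φ (nontangMax n Ω K b x))) hbase hann
  refine le_trans (setLIntegral_le_lintegral _ _) (le_trans hmaster ?_)
  refine ENNReal.ofReal_le_ofReal (le_of_eq ?_)
  rw [show (2 * (2 * r₀)) = 4 * r₀ by ring, show (4 * (2 * r₀)) = 8 * r₀ by ring,
    mul_pow, mul_pow, hadef]
  ring
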